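/- arXiv:math/0211458 — 2 statements merged into one kernel-verified Lean document; each statement's English description precedes it below -/
import Mathlib

section
/- Let f : [0,T] × (0,1] → ℝ^d be defined by f(t,α) = X_{t,α}, where X is γ-Hölder continuous with γ > 1/2 and X_{t,α} is its mollification as above. Then the area Jacobian J_f = √(|∂_t X_{t,α}|² |∂_α X_{t,α}|² − ⟨∂_t X_{t,α}, ∂_α X_{t,α}⟩²) satisfies J_f(t,α) ≤ C α^{2(γ−1)}, and consequently ∫_{[0,T]×(0,1]} J_f dt dα < ∞. -/
open MeasureTheory

/-- given the mollification estimates `|∂_t X_{t,α}| ≤ C α^{γ-1}` and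
`|∂_α X_{t,α}| ≤ C α^{γ-1}` with `γ > 1/2`, the area Jacobian
`J_f = √(|∂_t X|²|∂_α X|² − ⟨∂_t X, ∂_α X⟩²)` satisfies `J_f ≤ C² α^{2(γ-1)}`,
and `∫_{[0,T]×(0,1]} J_f < ∞`. -/
theorem stmt_4 {d : ℕ} (γ T C : ℝ) (hγ : 1 / 2 < γ) (hγ1 : γ ≤ 1) (hT : 0 < T) (hC : 0 ≤ C)
    (Dt Dα : ℝ → ℝ → EuclideanSpace ℝ (Fin d))
    (hDt : ∀ t ∈ Set.Icc (0 : ℝ) T, ∀ α ∈ Set.Ioc (0 : ℝ) 1, ‖Dt t α‖ ≤ C * α ^ (γ - 1))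
    (hDα : ∀ t ∈ Set.Icc (0 : ℝ) T, ∀ α ∈ Set.Ioc (0 : ℝ) 1, ‖Dα t α‖ ≤ C * α ^ (γ - 1)) :
    (∀ t ∈ Set.Icc (0 : ℝ) T, ∀ α ∈ Set.Ioc (0 : ℝ) 1,
        Real.sqrt (‖Dt t α‖ ^ 2 * ‖Dα t α‖ ^ 2 - (inner ℝ (Dt t α) (Dα t α) : ℝ) ^ 2)
          ≤ C ^ 2 * α ^ (2 * (γ - 1))) ∧
      ∫⁻ p in Set.Icc (0 : ℝ) T ×ˢ Set.Ioc (0 : ℝ) 1,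
          ENNReal.ofReal (Real.sqrt (‖Dt p.1 p.2‖ ^ 2 * ‖Dα p.1 p.2‖ ^ 2
            - (inner ℝ (Dt p.1 p.2) (Dα p.1 p.2) : ℝ) ^ 2)) < ⊤ := by
  have hpt : ∀ t ∈ Set.Icc (0 : ℝ) T, ∀ α ∈ Set.Ioc (0 : ℝ) 1,
      Real.sqrt (‖Dt t α‖ ^ 2 * ‖Dα t α‖ ^ 2 - (inner ℝ (Dt t α) (Dα t α) : ℝ) ^ 2)
        ≤ C ^ 2 * α ^ (2 * (γ - 1)) := by
    intro t ht α hα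
    have h1 : Real.sqrt (‖Dt t α‖ ^ 2 * ‖Dα t α‖ ^ 2 - (inner ℝ (Dt t α) (Dα t α) : ℝ) ^ 2)
        ≤ ‖Dt t α‖ * ‖Dα t α‖ := by
      have : ‖Dt t α‖ ^ 2 * ‖Dα t α‖ ^ 2 - (inner ℝ (Dt t α) (Dα t α) : ℝ) ^ 2
          ≤ (‖Dt t α‖ * ‖Dα t α‖) ^ 2 := by nlinarith [sq_nonneg (inner ℝ (Dt t α) (Dα t α) : ℝ)]
      calc Real.sqrt _ ≤ Real.sqrt ((‖Dt t α‖ * ‖Dα t α‖) ^ 2) := Real.sqrt_le_sqrt this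
        _ = ‖Dt t α‖ * ‖Dα t α‖ := Real.sqrt_sq (by positivity)
    have hrp : (0:ℝ) ≤ α ^ (γ - 1) := Real.rpow_nonneg hα.1.le _
    have h2 : ‖Dt t α‖ * ‖Dα t α‖ ≤ (C * α ^ (γ - 1)) * (C * α ^ (γ - 1)) :=
      mul_le_mul (hDt t ht α hα) (hDα t ht α hα) (norm_nonneg _) (by positivity)
    have h3 : (C * α ^ (γ - 1)) * (C * α ^ (γ - 1)) = C ^ 2 * α ^ (2 * (γ - 1)) := by
      rw [show (2:ℝ) * (γ - 1) = (γ - 1) + (γ - 1) by ring,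
        Real.rpow_add hα.1]
      ring
    linarith
  refine ⟨hpt, ?_⟩
  have hmeas : MeasurableSet (Set.Icc (0 : ℝ) T ×ˢ Set.Ioc (0 : ℝ) 1) :=
    measurableSet_Icc.prod measurableSet_Ioc
  have hbound : ∫⁻ p in Set.Icc (0 : ℝ) T ×ˢ Set.Ioc (0 : ℝ) 1,
      ENNReal.ofReal (Real.sqrt (‖Dt p.1 p.2‖ ^ 2 * ‖Dα p.1 p.2‖ ^ 2
        - (inner ℝ (Dt p.1 p.2) (Dα p.1 p.2) : ℝ) ^ 2))
      ≤ ∫⁻ p in Set.Icc (0 : ℝ) T ×ˢ Set.Ioc (0 : ℝ) 1,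
        ENNReal.ofReal (C ^ 2 * p.2 ^ (2 * (γ - 1))) := by
    refine setLIntegral_mono' hmeas fun p hp => ?_
    exact ENNReal.ofReal_le_ofReal (hpt p.1 hp.1 p.2 hp.2)
  refine lt_of_le_of_lt hbound ?_
  have hint : IntegrableOn (fun α : ℝ => C ^ 2 * α ^ (2 * (γ - 1))) (Set.Ioc 0 1) := by
    have h : IntegrableOn (fun α : ℝ => α ^ (2 * (γ - 1))) (Set.Ioc 0 1) := by
      rw [integrableOn_Ioc_iff_integrableOn_Ioo, intervalIntegral.integrableOn_Ioo_rpow_iff one_pos]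
      linarith
    exact h.const_mul _
  have hin : ∫⁻ α in Set.Ioc (0:ℝ) 1, ENNReal.ofReal (C ^ 2 * α ^ (2 * (γ - 1))) < ⊤ :=
    hint.lintegral_lt_top
  have hg : Measurable fun p : ℝ × ℝ => ENNReal.ofReal (C ^ 2 * p.2 ^ (2 * (γ - 1))) := by
    apply Measurable.ennreal_ofReal
    fun_prop
  rw [Measure.volume_eq_prod, ← Measure.prod_restrict,
    lintegral_prod _ hg.aemeasurable]
  simp only [lintegral_const, Measure.restrict_apply MeasurableSet.univ, Set.univ_inter]
  exact ENNReal.mul_lt_top hin measure_Icc_lt_top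
end

section
/- Let X : [0,T] → ℝ^d be continuous and satisfy ∫₀^T∫₀^T |X_t−X_s|²/|t−s|² dt ds < ∞ together with ∫₀^T |X_T−X_s|/|T−s| ds < ∞ and ∫₀^T |X_0−X_s|/|s| ds < ∞ (the class W_C^{1/2,2}). Then the mollification X_{t,α} satisfies ∫₀^T ∫₀^1 (|∂_t X_{t,α}|² + |∂_α X_{t,α}|²) dt dα < ∞. -/
open MeasureTheory
open scoped ENNReal

lemma stmt12_cs {μ : Measure ℝ} {f : ℝ → ℝ≥0∞} (hf : AEMeasurable f μ) :
    (∫⁻ x, f x ∂μ) ^ 2 ≤ (∫⁻ x, f x ^ 2 ∂μ) * μ Set.univ := by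
  have hpq : Real.HolderConjugate 2 2 := ⟨by norm_num, by norm_num, by norm_num⟩
  have h := ENNReal.lintegral_mul_le_Lp_mul_Lq μ hpq hf (aemeasurable_const (b := (1:ℝ≥0∞)))
  simp only [Pi.mul_apply, Pi.one_apply, mul_one, ENNReal.one_rpow, lintegral_const,
    one_mul] at h
  calc (∫⁻ x, f x ∂μ) ^ 2
      ≤ ((∫⁻ x, f x ^ (2:ℝ) ∂μ) ^ (1/(2:ℝ)) * (μ Set.univ) ^ (1/(2:ℝ))) ^ 2 := by
        gcongr
    _ = (∫⁻ x, f x ^ 2 ∂μ) * μ Set.univ := by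
        rw [mul_pow, ← ENNReal.rpow_natCast (_ ^ (1/(2:ℝ))) 2,
          ← ENNReal.rpow_natCast ((μ Set.univ) ^ (1/(2:ℝ))) 2, ← ENNReal.rpow_mul,
          ← ENNReal.rpow_mul]
        norm_num

lemma stmt12_kernel {E : Type*} [NormedAddCommGroup E] [NormedSpace ℝ E]
    {t α : ℝ} (Y : ℝ → E) (z : E)
    (hY : AEMeasurable (fun s => (‖Y s - z‖₊ : ℝ≥0∞)) (volume.restrict (Set.Icc (t - α) (t + α)))) (hα : 0 < α)
    (K : ℝ → ℝ) {c : ℝ}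
    (hKc : ∀ s, s ∈ Set.Icc (t - α) (t + α) → |K s| ≤ c)
    (hK0 : ∀ s, s ∉ Set.Icc (t - α) (t + α) → K s = 0) :
    (‖∫ s, K s • (Y s - z)‖₊ : ℝ≥0∞) ^ 2
      ≤ ENNReal.ofReal c ^ 2 * ENNReal.ofReal (2 * α)
        * ∫⁻ s in Set.Icc (t - α) (t + α), (‖Y s - z‖₊ : ℝ≥0∞) ^ 2 := by
  set I := Set.Icc (t - α) (t + α) with hI
  have hc : 0 ≤ c := le_trans (abs_nonneg _) (hKc t (by constructor <;> nlinarith))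
  have step1 : (‖∫ s, K s • (Y s - z)‖₊ : ℝ≥0∞)
      ≤ ENNReal.ofReal c * ∫⁻ s in I, (‖Y s - z‖₊ : ℝ≥0∞) := by
    refine (enorm_integral_le_lintegral_enorm _).trans ?_
    rw [← lintegral_indicator measurableSet_Icc _, ← lintegral_const_mul']
    swap; · exact ENNReal.ofReal_ne_top
    refine lintegral_mono fun s => ?_
    by_cases hs : s ∈ I
    · rw [Set.indicator_of_mem hs]
      rw [enorm_eq_nnnorm, nnnorm_smul]
      push_cast
      rw [← enorm_eq_nnnorm, ← enorm_eq_nnnorm, ← ofReal_norm, ← ofReal_norm]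
      refine mul_le_mul_left ?_ _
      exact ENNReal.ofReal_le_ofReal ((Real.norm_eq_abs _) ▸ hKc s hs)
    · rw [Set.indicator_of_notMem hs, hK0 s hs, zero_smul, enorm_zero]
      simp
  have step2 : (∫⁻ s in I, (‖Y s - z‖₊ : ℝ≥0∞)) ^ 2
      ≤ (∫⁻ s in I, (‖Y s - z‖₊ : ℝ≥0∞) ^ 2) * ENNReal.ofReal (2 * α) := by
    have := stmt12_cs (μ := volume.restrict I)
      (f := fun s => (‖Y s - z‖₊ : ℝ≥0∞)) hY
    refine this.trans ?_
    rw [Measure.restrict_apply_univ, hI, Real.volume_Icc]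
    gcongr
    rw [show t + α - (t - α) = 2 * α by ring]
  calc (‖∫ s, K s • (Y s - z)‖₊ : ℝ≥0∞) ^ 2
      ≤ (ENNReal.ofReal c * ∫⁻ s in I, (‖Y s - z‖₊ : ℝ≥0∞)) ^ 2 := by gcongr
    _ = ENNReal.ofReal c ^ 2 * (∫⁻ s in I, (‖Y s - z‖₊ : ℝ≥0∞)) ^ 2 := by rw [mul_pow]
    _ ≤ ENNReal.ofReal c ^ 2 * ((∫⁻ s in I, (‖Y s - z‖₊ : ℝ≥0∞) ^ 2) * ENNReal.ofReal (2 * α)) := by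
        gcongr
    _ = ENNReal.ofReal c ^ 2 * ENNReal.ofReal (2 * α)
        * ∫⁻ s in I, (‖Y s - z‖₊ : ℝ≥0∞) ^ 2 := by ring


lemma stmt12_deriv_zero (η : ℝ → ℝ) (hsupp : Function.support η ⊆ Set.Icc (-1:ℝ) 1)
    {u : ℝ} (hu : u ∉ Set.Icc (-1:ℝ) 1) : deriv η u = 0 := by
  have hev : η =ᶠ[nhds u] (fun _ => (0:ℝ)) := by
    filter_upwards [isClosed_Icc.isOpen_compl.mem_nhds hu] with v hv
    by_contra h
    exact hv (hsupp h)
  rw [hev.deriv_eq]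
  exact deriv_const u 0

lemma stmt12_bdd (η : ℝ → ℝ) (hc : Continuous η)
    (h0 : ∀ u, u ∉ Set.Icc (-1:ℝ) 1 → η u = 0) :
    ∃ D, 0 ≤ D ∧ ∀ u, |η u| ≤ D := by
  obtain ⟨C, hC⟩ := isCompact_Icc.exists_bound_of_continuousOn
    (s := Set.Icc (-1:ℝ) 1) hc.continuousOn
  refine ⟨max C 0, le_max_right _ _, fun u => ?_⟩
  by_cases hu : u ∈ Set.Icc (-1:ℝ) 1
  · exact le_trans (hC u hu) (le_max_left _ _)
  · rw [h0 u hu, abs_zero]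
    exact le_max_right _ _

lemma stmt12_ftc {a b c C : ℝ} (hC : 0 ≤ C) (hc : c ∉ Set.Icc a b) (hab : a ≤ b) :
    ∫⁻ s in Set.Ioc a b, ENNReal.ofReal (C / (s - c) ^ 2)
      = ENNReal.ofReal (C / (a - c) - C / (b - c)) := by
  have hne : ∀ s ∈ Set.Icc a b, s - c ≠ 0 := fun s hs h => hc (by
    have : s = c := by linarith [sub_eq_zero.mp h]
    exact this ▸ hs)
  have hcont : ContinuousOn (fun s : ℝ => C / (s - c) ^ 2) (Set.Icc a b) := by
    refine ContinuousOn.div continuousOn_const ?_ ?_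
    · exact ((continuous_id.sub continuous_const).pow 2).continuousOn
    · exact fun s hs => pow_ne_zero 2 (hne s hs)
  have hderiv : ∀ s ∈ Set.uIcc a b,
      HasDerivAt (fun s : ℝ => -C * (s - c) ^ (-1 : ℤ)) (C / (s - c) ^ 2) s := by
    intro s hs
    rw [Set.uIcc_of_le hab] at hs
    have h1 : HasDerivAt (fun s : ℝ => (s - c) ^ (-1 : ℤ))
        ((-1 : ℤ) * (s - c) ^ (-2 : ℤ) * 1) s := by
      have h2 := (hasDerivAt_zpow (-1) (s - c) (Or.inl (hne s hs)))
      have h3 := h2.comp s ((hasDerivAt_id s).sub_const c)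
      simpa [Function.comp_def] using h3
    have h4 := h1.const_mul (-C)
    convert h4 using 1
    case e'_4 => rfl
    case e'_5 => rfl
    push_cast
    rw [zpow_neg, zpow_two]
    field_simp
  have hint : IntervalIntegrable (fun s : ℝ => C / (s - c) ^ 2) volume a b := by
    rw [intervalIntegrable_iff_integrableOn_Icc_of_le hab]
    exact hcont.integrableOn_Icc
  have hval : ∫ s in a..b, C / (s - c) ^ 2
      = (-C * (b - c) ^ (-1 : ℤ)) - (-C * (a - c) ^ (-1 : ℤ)) :=
    intervalIntegral.integral_eq_sub_of_hasDerivAt hderiv hint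
  have hnn : 0 ≤ᵐ[volume.restrict (Set.Ioc a b)] fun s : ℝ => C / (s - c) ^ 2 := by
    refine ae_of_all _ fun s => ?_
    positivity
  have hInt : IntegrableOn (fun s : ℝ => C / (s - c) ^ 2) (Set.Ioc a b) volume :=
    (intervalIntegrable_iff_integrableOn_Ioc_of_le hab).mp hint
  rw [← ofReal_integral_eq_lintegral_ofReal hInt hnn]
  congr 1
  rw [← intervalIntegral.integral_of_le hab, hval]
  push_cast
  rw [zpow_neg, zpow_neg, zpow_one, zpow_one]
  ring

lemma stmt12_ftc3 {r C : ℝ} (hr : 0 < r) (hr1 : r ≤ 1) (hC : 0 ≤ C) :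
    ∫⁻ α in Set.Icc r 1, ENNReal.ofReal (C / α ^ 3) ≤ ENNReal.ofReal (C / (2 * r ^ 2)) := by
  have hne : ∀ s ∈ Set.Icc r 1, s ≠ 0 := fun s hs => ne_of_gt (lt_of_lt_of_le hr hs.1)
  have hcont : ContinuousOn (fun s : ℝ => C / s ^ 3) (Set.Icc r 1) :=
    ContinuousOn.div continuousOn_const (continuous_pow 3).continuousOn
      (fun s hs => pow_ne_zero 3 (hne s hs))
  have hderiv : ∀ s ∈ Set.uIcc r 1,
      HasDerivAt (fun s : ℝ => (-C / 2) * s ^ (-2 : ℤ)) (C / s ^ 3) s := by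
    intro s hs
    rw [Set.uIcc_of_le hr1] at hs
    have h1 := (hasDerivAt_zpow (-2) s (Or.inl (hne s hs))).const_mul (-C / 2)
    convert h1 using 1
    case e'_4 => rfl
    case e'_5 => rfl
    push_cast
    rw [zpow_neg]
    norm_num
    field_simp
  have hint : IntervalIntegrable (fun s : ℝ => C / s ^ 3) volume r 1 := by
    rw [intervalIntegrable_iff_integrableOn_Icc_of_le hr1]
    exact hcont.integrableOn_Icc
  have hval : ∫ s in r..1, C / s ^ 3
      = ((-C / 2) * (1 : ℝ) ^ (-2 : ℤ)) - ((-C / 2) * r ^ (-2 : ℤ)) :=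
    intervalIntegral.integral_eq_sub_of_hasDerivAt hderiv hint
  have hnn : 0 ≤ᵐ[volume.restrict (Set.Ioc r 1)] fun s : ℝ => C / s ^ 3 := by
    filter_upwards [ae_restrict_mem measurableSet_Ioc] with s hs
    exact div_nonneg hC (pow_nonneg (hr.trans hs.1).le 3)
  have hInt : IntegrableOn (fun s : ℝ => C / s ^ 3) (Set.Ioc r 1) volume :=
    (intervalIntegrable_iff_integrableOn_Ioc_of_le hr1).mp hint
  rw [← setLIntegral_congr Ioc_ae_eq_Icc,
    ← ofReal_integral_eq_lintegral_ofReal hInt hnn]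
  refine ENNReal.ofReal_le_ofReal ?_
  rw [← intervalIntegral.integral_of_le hr1, hval]
  push_cast
  rw [zpow_neg, zpow_neg, zpow_two, zpow_two]
  have key : -C / 2 * ((1:ℝ) * 1)⁻¹ - -C / 2 * (r * r)⁻¹ = C / (2 * (r * r)) - C / 2 := by
    field_simp
    ring
  rw [key, pow_two]
  exact sub_le_self _ (by positivity)

set_option maxHeartbeats 1000000 in
/-- if a continuous `X : [0,T] → ℝ^d` lies in the class `W_C^{1/2,2}`
(the three integral conditions below), then the mollification (built from the extension
of `X` by constants outside `[0,T]`) has square-integrable partial derivatives: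
`∫₀^T ∫₀^1 (|∂_t X_{t,α}|² + |∂_α X_{t,α}|²) dt dα < ∞`. -/
theorem stmt_12 {d : ℕ} (T : ℝ) (hT : 0 < T)
    (X : ℝ → EuclideanSpace ℝ (Fin d)) (hX : Continuous X)
    (h1 : ∫⁻ p in Set.Icc (0 : ℝ) T ×ˢ Set.Icc (0 : ℝ) T,
        ENNReal.ofReal (‖X p.1 - X p.2‖ ^ 2 / |p.1 - p.2| ^ 2) < ⊤)
    (h2 : ∫⁻ s in Set.Icc (0 : ℝ) T, ENNReal.ofReal (‖X T - X s‖ / |T - s|) < ⊤)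
    (h3 : ∫⁻ s in Set.Icc (0 : ℝ) T, ENNReal.ofReal (‖X 0 - X s‖ / |s|) < ⊤)
    (η : ℝ → ℝ) (hη : ContDiff ℝ 1 η)
    (hsupp : Function.support η ⊆ Set.Icc (-1 : ℝ) 1)
    (hone : ∫ u, η u = 1) :
    ∫⁻ p in Set.Icc (0 : ℝ) T ×ˢ Set.Ioc (0 : ℝ) 1,
      ENNReal.ofReal
        (‖∫ s, (-(p.2 ^ 2)⁻¹ * deriv η ((p.1 - s) / p.2))
            • (X (min T (max 0 s)) - X (min T (max 0 p.1)))‖ ^ 2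
          + ‖∫ s, (-(p.2 ^ 2)⁻¹ * η ((p.1 - s) / p.2)
                - ((p.1 - s) / p.2 ^ 3) * deriv η ((p.1 - s) / p.2))
              • (X (min T (max 0 s)) - X (min T (max 0 p.1)))‖ ^ 2) < ⊤ := by
  classical
  set Y : ℝ → EuclideanSpace ℝ (Fin d) := fun r => X (min T (max 0 r)) with hYdef
  have hYc : Continuous Y :=
    hX.comp (continuous_const.min (continuous_const.max continuous_id))
  have hYid : ∀ t ∈ Set.Icc (0:ℝ) T, Y t = X t := by
    intro t ht
    simp only [hYdef]
    rw [max_eq_right ht.1, min_eq_right ht.2]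
  have hYT : ∀ s, T ≤ s → Y s = X T := by
    intro s hs
    simp only [hYdef]
    rw [max_eq_right (hT.le.trans hs), min_eq_left hs]
  have hY0 : ∀ s, s ≤ 0 → Y s = X 0 := by
    intro s hs
    simp only [hYdef]
    rw [max_eq_left hs, min_eq_right hT.le]
  -- bounds on η, deriv η
  have hη0 : ∀ u, u ∉ Set.Icc (-1:ℝ) 1 → η u = 0 := fun u hu => by
    by_contra h
    exact hu (hsupp h)
  have hη'0 : ∀ u, u ∉ Set.Icc (-1:ℝ) 1 → deriv η u = 0 :=
    fun u hu => stmt12_deriv_zero η hsupp hu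
  obtain ⟨D₁, hD₁0, hD₁⟩ := stmt12_bdd η hη.continuous hη0
  obtain ⟨D₂, hD₂0, hD₂⟩ := stmt12_bdd (deriv η) (hη.continuous_deriv le_rfl) hη'0
  set D : ℝ := max D₁ D₂ with hDdef
  have hD0 : 0 ≤ D := le_trans hD₁0 (le_max_left _ _)
  have hDη : ∀ u, |η u| ≤ D := fun u => (hD₁ u).trans (le_max_left _ _)
  have hDη' : ∀ u, |deriv η u| ≤ D := fun u => (hD₂ u).trans (le_max_right _ _)
  -- bound on Y
  obtain ⟨M, hM0, hM⟩ : ∃ M, 0 ≤ M ∧ ∀ r, ‖Y r‖ ≤ M := by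
    obtain ⟨C, hC⟩ := isCompact_Icc.exists_bound_of_continuousOn
      (s := Set.Icc (0:ℝ) T) hX.continuousOn
    refine ⟨max C 0, le_max_right _ _, fun r => ?_⟩
    refine le_trans (hC _ ⟨le_min hT.le (le_max_left _ _), min_le_left _ _⟩) (le_max_left _ _)
  -- the squared increment
  set g : ℝ × ℝ → ℝ≥0∞ := fun q => (‖Y q.2 - Y q.1‖₊ : ℝ≥0∞) ^ 2 with hgdef
  have hgm : Measurable g := by
    have h0 : Measurable fun q : ℝ × ℝ => (‖Y q.2 - Y q.1‖₊ : ℝ≥0∞) :=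
      measurable_coe_nnreal_ennreal.comp
        ((hYc.comp continuous_snd).sub (hYc.comp continuous_fst)).nnnorm.measurable
    exact h0.pow_const 2
  have hgfin : ∀ q, g q ≠ ⊤ := fun q => by
    simp only [hgdef]
    exact ENNReal.pow_ne_top ENNReal.coe_ne_top
  have hgdiag : ∀ t, g (t, t) = 0 := fun t => by simp [hgdef]
  -- the majorant after the kernel estimate
  set W : ℝ × ℝ → ℝ → ℝ≥0∞ :=
    fun p s => if |s - p.1| ≤ p.2 then g (p.1, s) else 0 with hWdef
  set H : ℝ × ℝ → ℝ≥0∞ :=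
    fun p => ENNReal.ofReal (10 * D ^ 2 / p.2 ^ 3) * ∫⁻ s, W p s with hHdef
  have hWm : Measurable (fun q : (ℝ × ℝ) × ℝ => W q.1 q.2) := by
    apply Measurable.ite
    · exact measurableSet_le
        (continuous_abs.comp ((continuous_snd.sub (continuous_fst.fst)))).measurable
        continuous_fst.snd.measurable
    · exact hgm.comp (measurable_fst.fst.prodMk measurable_snd)
    · exact measurable_const
  have hHm : Measurable H := by
    apply Measurable.mul
    · exact ENNReal.measurable_ofReal.comp
        (measurable_const.div ((measurable_snd.pow_const 3)))
    · exact hWm.lintegral_prod_right'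
  -- the majorant after the α-integration
  set R : ℝ × ℝ → ℝ≥0∞ :=
    fun q => if |q.2 - q.1| ≤ 1 then ENNReal.ofReal (5 * D ^ 2 / (q.2 - q.1) ^ 2) else 0
    with hRdef
  have hRm : Measurable R := by
    apply Measurable.ite
    · exact measurableSet_le (continuous_abs.comp (continuous_snd.sub continuous_fst)).measurable
        measurable_const
    · exact ENNReal.measurable_ofReal.comp
        (measurable_const.div (((measurable_snd.sub measurable_fst).pow_const 2)))
    · exact measurable_const
  have hgRm : Measurable (fun q : ℝ × ℝ => g q * R q) := hgm.mul hRm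
  -- step 1 : pointwise kernel bound
  have hpt : ∀ p : ℝ × ℝ, p ∈ Set.Icc (0:ℝ) T ×ˢ Set.Ioc (0:ℝ) 1 →
      ENNReal.ofReal
        (‖∫ s, (-(p.2 ^ 2)⁻¹ * deriv η ((p.1 - s) / p.2))
            • (X (min T (max 0 s)) - X (min T (max 0 p.1)))‖ ^ 2
          + ‖∫ s, (-(p.2 ^ 2)⁻¹ * η ((p.1 - s) / p.2)
                - ((p.1 - s) / p.2 ^ 3) * deriv η ((p.1 - s) / p.2))
              • (X (min T (max 0 s)) - X (min T (max 0 p.1)))‖ ^ 2) ≤ H p := by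
    rintro ⟨t, α⟩ hp
    have hYe : ∀ r, X (min T (max 0 r)) = Y r := fun r => rfl
    simp only [hYe]
    have hα : 0 < α := hp.2.1
    have hα2 : (0:ℝ) < α ^ 2 := by positivity
    have hα3 : (0:ℝ) < α ^ 3 := by positivity
    have hIccIff : ∀ s : ℝ, ((t - s) / α ∈ Set.Icc (-1:ℝ) 1) ↔ s ∈ Set.Icc (t - α) (t + α) := by
      intro s
      rw [Set.mem_Icc, Set.mem_Icc, div_le_one hα, le_div_iff₀ hα]
      constructor <;> intro h <;> exact ⟨by linarith [h.1, h.2], by linarith [h.1, h.2]⟩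
    have habs : ∀ s : ℝ, s ∈ Set.Icc (t - α) (t + α) → |t - s| ≤ α := by
      intro s hs
      rw [Set.mem_Icc] at hs
      rw [abs_le]
      exact ⟨by linarith [hs.1, hs.2], by linarith [hs.1, hs.2]⟩
    have hmeas : AEMeasurable (fun s => (‖Y s - Y t‖₊ : ℝ≥0∞))
        (volume.restrict (Set.Icc (t - α) (t + α))) :=
      (measurable_coe_nnreal_ennreal.comp
        ((hYc.sub continuous_const).nnnorm.measurable)).aemeasurable
    -- first kernel
    have hA := stmt12_kernel (t := t) (α := α) Y (Y t) hmeas hα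
      (fun s => -(α ^ 2)⁻¹ * deriv η ((t - s) / α)) (c := D / α ^ 2)
      (fun s _ => by
        show |-(α ^ 2)⁻¹ * deriv η ((t - s) / α)| ≤ D / α ^ 2
        rw [show D / α ^ 2 = (α ^ 2)⁻¹ * D by ring, abs_mul, abs_neg, abs_inv, abs_of_pos hα2]
        exact mul_le_mul_of_nonneg_left (hDη' _) (by positivity))
      (fun s hs => by
        show -(α ^ 2)⁻¹ * deriv η ((t - s) / α) = 0
        rw [hη'0 _ (fun hmem => hs ((hIccIff s).mp hmem)), mul_zero])
    -- second kernel
    have hB := stmt12_kernel (t := t) (α := α) Y (Y t) hmeas hα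
      (fun s => -(α ^ 2)⁻¹ * η ((t - s) / α) - ((t - s) / α ^ 3) * deriv η ((t - s) / α))
      (c := 2 * D / α ^ 2)
      (fun s hs => by
        show |-(α ^ 2)⁻¹ * η ((t - s) / α) - ((t - s) / α ^ 3) * deriv η ((t - s) / α)| ≤ 2 * D / α ^ 2
        have h1 : |-(α ^ 2)⁻¹ * η ((t - s) / α)| ≤ (α ^ 2)⁻¹ * D := by
          rw [abs_mul, abs_neg, abs_inv, abs_of_pos hα2]
          exact mul_le_mul_of_nonneg_left (hDη _) (by positivity)
        have h2 : |((t - s) / α ^ 3) * deriv η ((t - s) / α)| ≤ (α ^ 2)⁻¹ * D := by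
          rw [abs_mul, abs_div, abs_of_pos hα3]
          have hle : |t - s| / α ^ 3 ≤ (α ^ 2)⁻¹ := by
            rw [div_le_iff₀ hα3]
            calc |t - s| ≤ α := habs s hs
              _ = (α ^ 2)⁻¹ * α ^ 3 := by field_simp
          exact mul_le_mul hle (hDη' _) (abs_nonneg _) (by positivity)
        calc |-(α ^ 2)⁻¹ * η ((t - s) / α) - ((t - s) / α ^ 3) * deriv η ((t - s) / α)|
            ≤ |-(α ^ 2)⁻¹ * η ((t - s) / α)| + |((t - s) / α ^ 3) * deriv η ((t - s) / α)| := by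
              rw [sub_eq_add_neg]
              exact (abs_add_le _ _).trans (by rw [abs_neg])
          _ ≤ (α ^ 2)⁻¹ * D + (α ^ 2)⁻¹ * D := add_le_add h1 h2
          _ = 2 * D / α ^ 2 := by ring)
      (fun s hs => by
        show -(α ^ 2)⁻¹ * η ((t - s) / α) - ((t - s) / α ^ 3) * deriv η ((t - s) / α) = 0
        have hnm : (t - s) / α ∉ Set.Icc (-1:ℝ) 1 := fun hmem => hs ((hIccIff s).mp hmem)
        rw [hη'0 _ hnm, hη0 _ hnm, mul_zero, mul_zero, sub_zero])
    -- identify the inner integral of the majorant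
    have hWI : (∫⁻ s, W (t, α) s)
        = ∫⁻ s in Set.Icc (t - α) (t + α), (‖Y s - Y t‖₊ : ℝ≥0∞) ^ 2 := by
      rw [← lintegral_indicator measurableSet_Icc]
      refine lintegral_congr fun s => ?_
      have hiff : (|s - t| ≤ α) ↔ s ∈ Set.Icc (t - α) (t + α) := by
        rw [Set.mem_Icc, abs_le]
        constructor <;> intro h <;> exact ⟨by linarith [h.1, h.2], by linarith [h.1, h.2]⟩
      simp only [hWdef, Set.indicator_apply, hgdef]
      by_cases hs : s ∈ Set.Icc (t - α) (t + α)
      · rw [if_pos (hiff.mpr hs), if_pos hs]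
      · rw [if_neg (fun h => hs (hiff.mp h)), if_neg hs]
    -- combine
    rw [ENNReal.ofReal_add (sq_nonneg _) (sq_nonneg _),
      ENNReal.ofReal_pow (norm_nonneg _), ENNReal.ofReal_pow (norm_nonneg _),
      ofReal_norm, ofReal_norm]
    calc (‖∫ s, (-(α ^ 2)⁻¹ * deriv η ((t - s) / α)) • (Y s - Y t)‖₊ : ℝ≥0∞) ^ 2
        + (‖∫ s, (-(α ^ 2)⁻¹ * η ((t - s) / α)
            - ((t - s) / α ^ 3) * deriv η ((t - s) / α)) • (Y s - Y t)‖₊ : ℝ≥0∞) ^ 2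
        ≤ ENNReal.ofReal (D / α ^ 2) ^ 2 * ENNReal.ofReal (2 * α)
            * (∫⁻ s in Set.Icc (t - α) (t + α), (‖Y s - Y t‖₊ : ℝ≥0∞) ^ 2)
          + ENNReal.ofReal (2 * D / α ^ 2) ^ 2 * ENNReal.ofReal (2 * α)
            * (∫⁻ s in Set.Icc (t - α) (t + α), (‖Y s - Y t‖₊ : ℝ≥0∞) ^ 2) :=
          add_le_add hA hB
      _ = (ENNReal.ofReal (D / α ^ 2) ^ 2 * ENNReal.ofReal (2 * α)
          + ENNReal.ofReal (2 * D / α ^ 2) ^ 2 * ENNReal.ofReal (2 * α))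
            * (∫⁻ s in Set.Icc (t - α) (t + α), (‖Y s - Y t‖₊ : ℝ≥0∞) ^ 2) := by
          rw [add_mul]
      _ = ENNReal.ofReal (10 * D ^ 2 / α ^ 3)
            * (∫⁻ s in Set.Icc (t - α) (t + α), (‖Y s - Y t‖₊ : ℝ≥0∞) ^ 2) := by
          rw [← ENNReal.ofReal_pow (by positivity), ← ENNReal.ofReal_pow (by positivity),
            ← ENNReal.ofReal_mul (by positivity), ← ENNReal.ofReal_mul (by positivity),
            ← ENNReal.ofReal_add (by positivity) (by positivity)]
          congr 1
          field_simp
          ring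
      _ = H (t, α) := by simp only [hHdef]; rw [hWI]
  -- step 2 : integrate in α
  have hswap : ∀ t : ℝ, ∫⁻ α in Set.Ioc (0:ℝ) 1, H (t, α) ≤ ∫⁻ s, g (t, s) * R (t, s) := by
    intro t
    have hform : ∀ α s : ℝ, ENNReal.ofReal (10 * D ^ 2 / α ^ 3) * W (t, α) s
        = g (t, s) * (if |s - t| ≤ α then ENNReal.ofReal (10 * D ^ 2 / α ^ 3) else 0) := by
      intro α s
      simp only [hWdef]
      by_cases h : |s - t| ≤ α
      · rw [if_pos h, if_pos h, mul_comm]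
      · rw [if_neg h, if_neg h, mul_zero, mul_zero]
    have hinner : ∀ s : ℝ,
        (∫⁻ α in Set.Ioc (0:ℝ) 1, ENNReal.ofReal (10 * D ^ 2 / α ^ 3) * W (t, α) s)
          ≤ g (t, s) * R (t, s) := by
      intro s
      simp only [hform]
      rw [lintegral_const_mul' _ _ (hgfin (t, s))]
      by_cases hg0 : g (t, s) = 0
      · rw [hg0, zero_mul, zero_mul]
      refine mul_le_mul_right ?_ _
      have hst : s ≠ t := fun h => hg0 (by rw [h]; exact hgdiag t)
      have hr : 0 < |s - t| := abs_pos.mpr (sub_ne_zero.mpr hst)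
      by_cases hr1 : |s - t| ≤ 1
      · calc ∫⁻ α in Set.Ioc (0:ℝ) 1,
              (if |s - t| ≤ α then ENNReal.ofReal (10 * D ^ 2 / α ^ 3) else 0)
            = ∫⁻ α in Set.Ioc (0:ℝ) 1,
              (Set.Ici |s - t|).indicator (fun α => ENNReal.ofReal (10 * D ^ 2 / α ^ 3)) α := by
              refine lintegral_congr fun α => ?_
              simp [Set.indicator_apply, Set.mem_Ici]
          _ = ∫⁻ α in Set.Ici |s - t| ∩ Set.Ioc (0:ℝ) 1,
              ENNReal.ofReal (10 * D ^ 2 / α ^ 3) := by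
              rw [lintegral_indicator measurableSet_Ici,
                Measure.restrict_restrict measurableSet_Ici]
          _ = ∫⁻ α in Set.Icc |s - t| 1, ENNReal.ofReal (10 * D ^ 2 / α ^ 3) := by
              have hseteq : Set.Ici |s - t| ∩ Set.Ioc (0:ℝ) 1 = Set.Icc |s - t| 1 := by
                ext x
                simp only [Set.mem_inter_iff, Set.mem_Ici, Set.mem_Ioc, Set.mem_Icc]
                constructor
                · rintro ⟨h1, _, h3⟩
                  exact ⟨h1, h3⟩
                · rintro ⟨h1, h2⟩
                  exact ⟨h1, lt_of_lt_of_le hr h1, h2⟩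
              rw [hseteq]
          _ ≤ ENNReal.ofReal (10 * D ^ 2 / (2 * |s - t| ^ 2)) :=
              stmt12_ftc3 hr hr1 (by positivity)
          _ ≤ R (t, s) := by
              simp only [hRdef]
              rw [if_pos hr1]
              refine le_of_eq ?_
              congr 1
              rw [← sq_abs (s - t)]
              ring
      · have hz : ∀ α ∈ Set.Ioc (0:ℝ) 1,
            (if |s - t| ≤ α then ENNReal.ofReal (10 * D ^ 2 / α ^ 3) else 0) = 0 :=
          fun α hα => if_neg (fun h => hr1 (le_trans h hα.2))
        rw [setLIntegral_congr_fun measurableSet_Ioc hz, lintegral_zero]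
        exact zero_le
    calc ∫⁻ α in Set.Ioc (0:ℝ) 1, H (t, α)
        = ∫⁻ α in Set.Ioc (0:ℝ) 1, ∫⁻ s, ENNReal.ofReal (10 * D ^ 2 / α ^ 3) * W (t, α) s := by
          refine lintegral_congr fun α => ?_
          simp only [hHdef]
          exact (lintegral_const_mul' _ _ ENNReal.ofReal_ne_top).symm
      _ = ∫⁻ s, ∫⁻ α in Set.Ioc (0:ℝ) 1, ENNReal.ofReal (10 * D ^ 2 / α ^ 3) * W (t, α) s := by
          refine lintegral_lintegral_swap ?_
          refine Measurable.aemeasurable ?_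
          have hW : Measurable fun q : ℝ × ℝ => W (t, q.1) q.2 :=
            hWm.comp ((measurable_const.prodMk measurable_fst).prodMk measurable_snd)
          exact (ENNReal.measurable_ofReal.comp
            (measurable_const.div (measurable_fst.pow_const 3))).mul hW
      _ ≤ ∫⁻ s, g (t, s) * R (t, s) := lintegral_mono hinner
  -- step 3 : finiteness of the three pieces
  have hφm : Measurable fun q : ℝ × ℝ => ENNReal.ofReal (‖X q.1 - X q.2‖ ^ 2 / |q.1 - q.2| ^ 2) := by
    refine ENNReal.measurable_ofReal.comp (Measurable.div ?_ ?_)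
    · exact (((hX.comp continuous_fst).sub (hX.comp continuous_snd)).norm.pow 2).measurable
    · exact (((continuous_fst.sub continuous_snd).abs).pow 2).measurable
  have hfinmid : ∫⁻ t in Set.Icc (0:ℝ) T, ∫⁻ s in Set.Icc (0:ℝ) T, g (t, s) * R (t, s) < ⊤ := by
    have hb : ∀ t ∈ Set.Icc (0:ℝ) T, ∀ s ∈ Set.Icc (0:ℝ) T, g (t, s) * R (t, s)
        ≤ ENNReal.ofReal (5 * D ^ 2)
          * ENNReal.ofReal (‖X t - X s‖ ^ 2 / |t - s| ^ 2) := by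
      intro t ht s hs
      by_cases hst : s = t
      · subst hst
        rw [hgdiag s, zero_mul]
        exact zero_le
      · simp only [hgdef]
        rw [hYid s hs, hYid t ht]
        have hR : R (t, s) ≤ ENNReal.ofReal (5 * D ^ 2 / (s - t) ^ 2) := by
          simp only [hRdef]
          split_ifs
          · exact le_rfl
          · exact zero_le
        calc (‖X s - X t‖₊ : ℝ≥0∞) ^ 2 * R (t, s)
            ≤ (‖X s - X t‖₊ : ℝ≥0∞) ^ 2 * ENNReal.ofReal (5 * D ^ 2 / (s - t) ^ 2) :=
              mul_le_mul_right hR _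
          _ = ENNReal.ofReal (5 * D ^ 2) * ENNReal.ofReal (‖X t - X s‖ ^ 2 / |t - s| ^ 2) := by
              rw [← enorm_eq_nnnorm, ← ofReal_norm, ← ENNReal.ofReal_pow (norm_nonneg _),
                ← ENNReal.ofReal_mul (by positivity), ← ENNReal.ofReal_mul (by positivity)]
              congr 1
              rw [norm_sub_rev, show (s - t) ^ 2 = |t - s| ^ 2 by rw [sq_abs]; ring]
              ring
    calc ∫⁻ t in Set.Icc (0:ℝ) T, ∫⁻ s in Set.Icc (0:ℝ) T, g (t, s) * R (t, s)
        ≤ ∫⁻ t in Set.Icc (0:ℝ) T, ∫⁻ s in Set.Icc (0:ℝ) T,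
            ENNReal.ofReal (5 * D ^ 2) * ENNReal.ofReal (‖X t - X s‖ ^ 2 / |t - s| ^ 2) := by
          have hm2 : Measurable fun t : ℝ => ∫⁻ s in Set.Icc (0:ℝ) T,
              ENNReal.ofReal (5 * D ^ 2) * ENNReal.ofReal (‖X t - X s‖ ^ 2 / |t - s| ^ 2) :=
            Measurable.lintegral_prod_right' (ν := volume.restrict (Set.Icc (0:ℝ) T))
              (f := fun q : ℝ × ℝ => ENNReal.ofReal (5 * D ^ 2)
                * ENNReal.ofReal (‖X q.1 - X q.2‖ ^ 2 / |q.1 - q.2| ^ 2))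
              (measurable_const.mul hφm)
          refine setLIntegral_mono hm2 ?_
          intro t ht
          have hm3 : Measurable fun s : ℝ =>
              ENNReal.ofReal (5 * D ^ 2) * ENNReal.ofReal (‖X t - X s‖ ^ 2 / |t - s| ^ 2) := by
            refine measurable_const.mul (ENNReal.measurable_ofReal.comp (Measurable.div ?_ ?_))
            · exact ((continuous_const.sub hX).norm.pow 2).measurable
            · exact (((continuous_const.sub continuous_id).abs).pow 2).measurable
          exact setLIntegral_mono hm3 (fun s hs => hb t ht s hs)
      _ = ENNReal.ofReal (5 * D ^ 2) * ∫⁻ t in Set.Icc (0:ℝ) T, ∫⁻ s in Set.Icc (0:ℝ) T,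
            ENNReal.ofReal (‖X t - X s‖ ^ 2 / |t - s| ^ 2) := by
          rw [← lintegral_const_mul' _ _ ENNReal.ofReal_ne_top]
          exact lintegral_congr fun t => lintegral_const_mul' _ _ ENNReal.ofReal_ne_top
      _ = ENNReal.ofReal (5 * D ^ 2) * ∫⁻ p in Set.Icc (0:ℝ) T ×ˢ Set.Icc (0:ℝ) T,
            ENNReal.ofReal (‖X p.1 - X p.2‖ ^ 2 / |p.1 - p.2| ^ 2) := by
          congr 1
          rw [Measure.volume_eq_prod, ← Measure.prod_restrict]
          exact (lintegral_prod _ hφm.aemeasurable).symm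
      _ < ⊤ := ENNReal.mul_lt_top ENNReal.ofReal_lt_top h1
  have hfinright : ∫⁻ t in Set.Icc (0:ℝ) T, ∫⁻ s in Set.Ioi T, g (t, s) * R (t, s) < ⊤ := by
    have hb : ∀ t ∈ Set.Icc (0:ℝ) T, (∫⁻ s in Set.Ioi T, g (t, s) * R (t, s))
        ≤ ENNReal.ofReal (10 * M * D ^ 2) * ENNReal.ofReal (‖X T - X t‖ / |T - t|) := by
      intro t ht
      by_cases htT : t = T
      · subst htT
        have hz : ∀ s ∈ Set.Ioi t, g (t, s) * R (t, s) = 0 := by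
          intro s hs
          simp only [hgdef]
          rw [hYT s (le_of_lt hs), hYT t le_rfl]
          simp
        rw [setLIntegral_congr_fun measurableSet_Ioi hz, lintegral_zero]
        exact zero_le
      have htT' : t < T := lt_of_le_of_ne ht.2 htT
      have hn0 : (0:ℝ) ≤ ‖X T - X t‖ := norm_nonneg _
      have hn2M : ‖X T - X t‖ ≤ 2 * M := by
        have e1 : X T = Y T := (hYT T le_rfl).symm
        have e2 : X t = Y t := (hYid t ht).symm
        rw [e1, e2]
        calc ‖Y T - Y t‖ ≤ ‖Y T‖ + ‖Y t‖ := norm_sub_le _ _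
          _ ≤ 2 * M := by linarith [hM T, hM t]
      have hmind : Measurable fun s : ℝ =>
          (Set.Ioc T (t + 1)).indicator (fun s => ENNReal.ofReal (5 * D ^ 2 / (s - t) ^ 2)) s := by
        refine Measurable.indicator ?_ measurableSet_Ioc
        refine ENNReal.measurable_ofReal.comp (Measurable.div measurable_const ?_)
        exact (((continuous_id.sub continuous_const)).pow 2).measurable
      calc ∫⁻ s in Set.Ioi T, g (t, s) * R (t, s)
          ≤ ∫⁻ s in Set.Ioi T, (‖X T - X t‖₊ : ℝ≥0∞) ^ 2
              * (Set.Ioc T (t + 1)).indicator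
                  (fun s => ENNReal.ofReal (5 * D ^ 2 / (s - t) ^ 2)) s := by
            refine setLIntegral_mono (measurable_const.mul hmind) ?_
            intro s hs
            have hgs : g (t, s) = (‖X T - X t‖₊ : ℝ≥0∞) ^ 2 := by
              simp only [hgdef]
              rw [hYT s (le_of_lt hs), hYid t ht]
            rw [hgs]
            refine mul_le_mul_right ?_ _
            simp only [hRdef]
            by_cases habs1 : |s - t| ≤ 1
            · rw [if_pos habs1, Set.indicator_of_mem]
              exact ⟨hs, by cases abs_le.mp habs1 with | intro h1 h2 => linarith⟩
            · rw [if_neg habs1]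
              exact zero_le
        _ = (‖X T - X t‖₊ : ℝ≥0∞) ^ 2 * ∫⁻ s in Set.Ioi T,
              (Set.Ioc T (t + 1)).indicator
                (fun s => ENNReal.ofReal (5 * D ^ 2 / (s - t) ^ 2)) s :=
            lintegral_const_mul' _ _ (ENNReal.pow_ne_top ENNReal.coe_ne_top)
        _ = (‖X T - X t‖₊ : ℝ≥0∞) ^ 2 * ∫⁻ s in Set.Ioc T (t + 1),
              ENNReal.ofReal (5 * D ^ 2 / (s - t) ^ 2) := by
            congr 1
            rw [lintegral_indicator measurableSet_Ioc,
              Measure.restrict_restrict measurableSet_Ioc,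
              Set.inter_eq_left.mpr (fun x hx => hx.1)]
        _ ≤ ENNReal.ofReal (10 * M * D ^ 2) * ENNReal.ofReal (‖X T - X t‖ / |T - t|) := by
            by_cases hTt1 : T ≤ t + 1
            · rw [stmt12_ftc (by positivity)
                (fun hc => absurd hc.1 (not_le.mpr htT')) hTt1]
              rw [← enorm_eq_nnnorm, ← ofReal_norm, ← ENNReal.ofReal_pow hn0,
                ← ENNReal.ofReal_mul (by positivity), ← ENNReal.ofReal_mul (by positivity)]
              refine ENNReal.ofReal_le_ofReal ?_
              rw [abs_of_pos (sub_pos.mpr htT')]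
              have hu : (0:ℝ) < T - t := sub_pos.mpr htT'
              have e1 : ‖X T - X t‖ ^ 2 * (5 * D ^ 2 / (T - t) - 5 * D ^ 2 / (t + 1 - t))
                  ≤ ‖X T - X t‖ ^ 2 * (5 * D ^ 2 / (T - t)) := by
                refine mul_le_mul_of_nonneg_left ?_ (sq_nonneg _)
                have h5 : (0:ℝ) ≤ 5 * D ^ 2 / (t + 1 - t) := by
                  rw [show t + 1 - t = (1:ℝ) by ring]
                  positivity
                linarith
              have e2 : ‖X T - X t‖ ^ 2 * (5 * D ^ 2 / (T - t))
                  ≤ (2 * M * ‖X T - X t‖) * (5 * D ^ 2 / (T - t)) := by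
                refine mul_le_mul_of_nonneg_right ?_ (by positivity)
                nlinarith [hn0, hn2M]
              have e3 : (2 * M * ‖X T - X t‖) * (5 * D ^ 2 / (T - t))
                  = 10 * M * D ^ 2 * (‖X T - X t‖ / (T - t)) := by ring
              linarith
            · rw [Set.Ioc_eq_empty (fun h => hTt1 (le_of_lt h)),
                Measure.restrict_empty, lintegral_zero_measure, mul_zero]
              exact zero_le
    have hm : Measurable fun t : ℝ =>
        ENNReal.ofReal (10 * M * D ^ 2) * ENNReal.ofReal (‖X T - X t‖ / |T - t|) := by
      refine measurable_const.mul (ENNReal.measurable_ofReal.comp (Measurable.div ?_ ?_))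
      · exact ((continuous_const.sub hX).norm).measurable
      · exact ((continuous_const.sub continuous_id).abs).measurable
    calc ∫⁻ t in Set.Icc (0:ℝ) T, ∫⁻ s in Set.Ioi T, g (t, s) * R (t, s)
        ≤ ∫⁻ t in Set.Icc (0:ℝ) T,
            ENNReal.ofReal (10 * M * D ^ 2) * ENNReal.ofReal (‖X T - X t‖ / |T - t|) :=
          setLIntegral_mono hm hb
      _ = ENNReal.ofReal (10 * M * D ^ 2)
          * ∫⁻ t in Set.Icc (0:ℝ) T, ENNReal.ofReal (‖X T - X t‖ / |T - t|) :=
          lintegral_const_mul' _ _ ENNReal.ofReal_ne_top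
      _ < ⊤ := ENNReal.mul_lt_top ENNReal.ofReal_lt_top h2
  have hfinleft : ∫⁻ t in Set.Icc (0:ℝ) T, ∫⁻ s in Set.Iio (0:ℝ), g (t, s) * R (t, s) < ⊤ := by
    have hb : ∀ t ∈ Set.Icc (0:ℝ) T, (∫⁻ s in Set.Iio (0:ℝ), g (t, s) * R (t, s))
        ≤ ENNReal.ofReal (10 * M * D ^ 2) * ENNReal.ofReal (‖X 0 - X t‖ / |t|) := by
      intro t ht
      by_cases ht0 : t = 0
      · subst ht0
        have hz : ∀ s ∈ Set.Iio (0:ℝ), g (0, s) * R (0, s) = 0 := by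
          intro s hs
          simp only [hgdef]
          rw [hY0 s (le_of_lt hs), hY0 0 le_rfl]
          simp
        rw [setLIntegral_congr_fun measurableSet_Iio hz, lintegral_zero]
        exact zero_le
      have ht0' : (0:ℝ) < t := lt_of_le_of_ne ht.1 (Ne.symm ht0)
      have hn0 : (0:ℝ) ≤ ‖X 0 - X t‖ := norm_nonneg _
      have hn2M : ‖X 0 - X t‖ ≤ 2 * M := by
        have e1 : X 0 = Y 0 := (hY0 0 le_rfl).symm
        have e2 : X t = Y t := (hYid t ht).symm
        rw [e1, e2]
        calc ‖Y 0 - Y t‖ ≤ ‖Y 0‖ + ‖Y t‖ := norm_sub_le _ _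
          _ ≤ 2 * M := by linarith [hM 0, hM t]
      have hmind : Measurable fun s : ℝ =>
          (Set.Icc (t - 1) 0).indicator
            (fun s => ENNReal.ofReal (5 * D ^ 2 / (s - t) ^ 2)) s := by
        refine Measurable.indicator ?_ measurableSet_Icc
        refine ENNReal.measurable_ofReal.comp (Measurable.div measurable_const ?_)
        exact (((continuous_id.sub continuous_const)).pow 2).measurable
      calc ∫⁻ s in Set.Iio (0:ℝ), g (t, s) * R (t, s)
          ≤ ∫⁻ s in Set.Iio (0:ℝ), (‖X 0 - X t‖₊ : ℝ≥0∞) ^ 2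
              * (Set.Icc (t - 1) 0).indicator
                  (fun s => ENNReal.ofReal (5 * D ^ 2 / (s - t) ^ 2)) s := by
            refine setLIntegral_mono (measurable_const.mul hmind) ?_
            intro s hs
            have hgs : g (t, s) = (‖X 0 - X t‖₊ : ℝ≥0∞) ^ 2 := by
              simp only [hgdef]
              rw [hY0 s (le_of_lt hs), hYid t ht]
            rw [hgs]
            refine mul_le_mul_right ?_ _
            simp only [hRdef]
            by_cases habs1 : |s - t| ≤ 1
            · rw [if_pos habs1, Set.indicator_of_mem]
              refine ⟨?_, le_of_lt hs⟩
              cases abs_le.mp habs1 with | intro h1 h2 => linarith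
            · rw [if_neg habs1]
              exact zero_le
        _ = (‖X 0 - X t‖₊ : ℝ≥0∞) ^ 2 * ∫⁻ s in Set.Iio (0:ℝ),
              (Set.Icc (t - 1) 0).indicator
                (fun s => ENNReal.ofReal (5 * D ^ 2 / (s - t) ^ 2)) s :=
            lintegral_const_mul' _ _ (ENNReal.pow_ne_top ENNReal.coe_ne_top)
        _ = (‖X 0 - X t‖₊ : ℝ≥0∞) ^ 2 * ∫⁻ s in Set.Icc (t - 1) 0 ∩ Set.Iio (0:ℝ),
              ENNReal.ofReal (5 * D ^ 2 / (s - t) ^ 2) := by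
            congr 1
            rw [lintegral_indicator measurableSet_Icc,
              Measure.restrict_restrict measurableSet_Icc]
        _ ≤ (‖X 0 - X t‖₊ : ℝ≥0∞) ^ 2 * ∫⁻ s in Set.Icc (t - 1) 0,
              ENNReal.ofReal (5 * D ^ 2 / (s - t) ^ 2) :=
            mul_le_mul_right
              (lintegral_mono' (Measure.restrict_mono Set.inter_subset_left le_rfl) le_rfl) _
        _ ≤ ENNReal.ofReal (10 * M * D ^ 2) * ENNReal.ofReal (‖X 0 - X t‖ / |t|) := by
            by_cases ht1 : t ≤ 1
            · rw [← setLIntegral_congr Ioc_ae_eq_Icc,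
                stmt12_ftc (by positivity)
                  (fun hc => absurd hc.2 (not_le.mpr ht0')) (by linarith)]
              rw [← enorm_eq_nnnorm, ← ofReal_norm, ← ENNReal.ofReal_pow hn0,
                ← ENNReal.ofReal_mul (by positivity), ← ENNReal.ofReal_mul (by positivity)]
              refine ENNReal.ofReal_le_ofReal ?_
              rw [abs_of_pos ht0']
              have hne : t ≠ 0 := ne_of_gt ht0'
              have heq : 5 * D ^ 2 / (t - 1 - t) - 5 * D ^ 2 / (0 - t)
                  = 5 * D ^ 2 / t - 5 * D ^ 2 := by
                rw [show t - 1 - t = (-1:ℝ) by ring, show (0:ℝ) - t = -t by ring,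
                  div_neg, div_neg, div_one]
                ring
              rw [heq]
              have e1 : ‖X 0 - X t‖ ^ 2 * (5 * D ^ 2 / t - 5 * D ^ 2)
                  ≤ ‖X 0 - X t‖ ^ 2 * (5 * D ^ 2 / t) := by
                refine mul_le_mul_of_nonneg_left ?_ (sq_nonneg _)
                have h5 : (0:ℝ) ≤ 5 * D ^ 2 := by positivity
                linarith
              have e2 : ‖X 0 - X t‖ ^ 2 * (5 * D ^ 2 / t)
                  ≤ (2 * M * ‖X 0 - X t‖) * (5 * D ^ 2 / t) := by
                refine mul_le_mul_of_nonneg_right ?_ (by positivity)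
                nlinarith [hn0, hn2M]
              have e3 : (2 * M * ‖X 0 - X t‖) * (5 * D ^ 2 / t)
                  = 10 * M * D ^ 2 * (‖X 0 - X t‖ / t) := by ring
              linarith
            · rw [Set.Icc_eq_empty (not_le.mpr (by linarith)),
                Measure.restrict_empty, lintegral_zero_measure, mul_zero]
              exact zero_le
    have hm : Measurable fun t : ℝ =>
        ENNReal.ofReal (10 * M * D ^ 2) * ENNReal.ofReal (‖X 0 - X t‖ / |t|) := by
      refine measurable_const.mul (ENNReal.measurable_ofReal.comp (Measurable.div ?_ ?_))
      · exact ((continuous_const.sub hX).norm).measurable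
      · exact continuous_abs.measurable
    calc ∫⁻ t in Set.Icc (0:ℝ) T, ∫⁻ s in Set.Iio (0:ℝ), g (t, s) * R (t, s)
        ≤ ∫⁻ t in Set.Icc (0:ℝ) T,
            ENNReal.ofReal (10 * M * D ^ 2) * ENNReal.ofReal (‖X 0 - X t‖ / |t|) :=
          setLIntegral_mono hm hb
      _ = ENNReal.ofReal (10 * M * D ^ 2)
          * ∫⁻ t in Set.Icc (0:ℝ) T, ENNReal.ofReal (‖X 0 - X t‖ / |t|) :=
          lintegral_const_mul' _ _ ENNReal.ofReal_ne_top
      _ < ⊤ := ENNReal.mul_lt_top ENNReal.ofReal_lt_top h3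
  -- put everything together
  have hsplit : ∀ t : ℝ, (∫⁻ s, g (t, s) * R (t, s)) =
      (∫⁻ s in Set.Iio (0:ℝ), g (t, s) * R (t, s))
      + (∫⁻ s in Set.Icc (0:ℝ) T, g (t, s) * R (t, s))
      + (∫⁻ s in Set.Ioi T, g (t, s) * R (t, s)) := by
    intro t
    have hset : Set.Iio (0:ℝ) ∪ (Set.Icc (0:ℝ) T ∪ Set.Ioi T) = Set.univ := by
      ext x
      simp only [Set.mem_union, Set.mem_Iio, Set.mem_Icc, Set.mem_Ioi, Set.mem_univ, iff_true]
      by_cases hx : x < 0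
      · exact Or.inl hx
      · by_cases hx2 : x ≤ T
        · exact Or.inr (Or.inl ⟨not_lt.mp hx, hx2⟩)
        · exact Or.inr (Or.inr (not_le.mp hx2))
    have h23 : Disjoint (Set.Icc (0:ℝ) T) (Set.Ioi T) := by
      rw [Set.disjoint_left]
      intro x hx hx2
      exact absurd hx2 (not_lt.mpr hx.2)
    have h12 : Disjoint (Set.Iio (0:ℝ)) (Set.Icc (0:ℝ) T ∪ Set.Ioi T) := by
      rw [Set.disjoint_left]
      rintro x hx (hx2 | hx2)
      · exact absurd hx2.1 (not_le.mpr hx)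
      · exact absurd (hT.trans hx2) (not_lt.mpr hx.le)
    calc (∫⁻ s, g (t, s) * R (t, s))
        = ∫⁻ s in Set.Iio (0:ℝ) ∪ (Set.Icc (0:ℝ) T ∪ Set.Ioi T), g (t, s) * R (t, s) := by
          rw [hset, Measure.restrict_univ]
      _ = (∫⁻ s in Set.Iio (0:ℝ), g (t, s) * R (t, s))
          + (∫⁻ s in Set.Icc (0:ℝ) T ∪ Set.Ioi T, g (t, s) * R (t, s)) :=
          lintegral_union (measurableSet_Icc.union measurableSet_Ioi) h12
      _ = (∫⁻ s in Set.Iio (0:ℝ), g (t, s) * R (t, s))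
          + ((∫⁻ s in Set.Icc (0:ℝ) T, g (t, s) * R (t, s))
            + (∫⁻ s in Set.Ioi T, g (t, s) * R (t, s))) := by
          rw [lintegral_union measurableSet_Ioi h23]
      _ = _ := by rw [← add_assoc]
  -- measurability of the three slice integrals
  have hmA : ∀ A : Set ℝ, Measurable fun t => ∫⁻ s in A, g (t, s) * R (t, s) := by
    intro A
    exact Measurable.lintegral_prod_right' (ν := volume.restrict A) hgRm
  calc ∫⁻ p in Set.Icc (0 : ℝ) T ×ˢ Set.Ioc (0 : ℝ) 1,
      ENNReal.ofReal
        (‖∫ s, (-(p.2 ^ 2)⁻¹ * deriv η ((p.1 - s) / p.2))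
            • (X (min T (max 0 s)) - X (min T (max 0 p.1)))‖ ^ 2
          + ‖∫ s, (-(p.2 ^ 2)⁻¹ * η ((p.1 - s) / p.2)
                - ((p.1 - s) / p.2 ^ 3) * deriv η ((p.1 - s) / p.2))
              • (X (min T (max 0 s)) - X (min T (max 0 p.1)))‖ ^ 2)
      ≤ ∫⁻ p in Set.Icc (0 : ℝ) T ×ˢ Set.Ioc (0 : ℝ) 1, H p := setLIntegral_mono hHm hpt
    _ = ∫⁻ t in Set.Icc (0:ℝ) T, ∫⁻ α in Set.Ioc (0:ℝ) 1, H (t, α) := by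
        rw [Measure.volume_eq_prod, ← Measure.prod_restrict]
        exact lintegral_prod _ hHm.aemeasurable
    _ ≤ ∫⁻ t in Set.Icc (0:ℝ) T, ∫⁻ s, g (t, s) * R (t, s) :=
        lintegral_mono fun t => hswap t
    _ = (∫⁻ t in Set.Icc (0:ℝ) T, ∫⁻ s in Set.Iio (0:ℝ), g (t, s) * R (t, s))
        + (∫⁻ t in Set.Icc (0:ℝ) T, ∫⁻ s in Set.Icc (0:ℝ) T, g (t, s) * R (t, s))
        + (∫⁻ t in Set.Icc (0:ℝ) T, ∫⁻ s in Set.Ioi T, g (t, s) * R (t, s)) := by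
        rw [lintegral_congr fun t => hsplit t, lintegral_add_left ((hmA _).fun_add (hmA _)),
          lintegral_add_left (hmA _)]
    _ < ⊤ := by
        refine ENNReal.add_lt_top.mpr ⟨ENNReal.add_lt_top.mpr ⟨hfinleft, hfinmid⟩, hfinright⟩
end
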